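/- Let p be a prime or p = ∞. Assume E[|log|a₁|_p|] < ∞, E[log⁺|b₁|_p] < ∞, and φ_p = E[log|a₁|_p] < 0; let Z_∞^p be the almost sure limit in ℚ_p of Σ_{k=1}^n a₁⋯a_{k−1} b_k, and let ν_p be the law of Z_∞^p. Then almost surely, for every bounded continuous function f : ℚ_p → ℝ, ∫_{ℚ_p} f(A_n z + B_n) dν_p(z) → f(Z_∞^p) as n → ∞; that is, the image measures x_n ν_p converge weakly to the Dirac measure at Z_∞^p almost surely. -/

import Mathlib

open MeasureTheory ProbabilityTheory Filter Topology

/-- With `K` a complete normed field realizing a place of `ℚ`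
(a prime `p` or `p = ∞`) and `(aₙ, bₙ)` i.i.d. in `ℚ* × ℚ`, assume
`E[|log |a₁|_p|] < ∞`, `E[log⁺ |b₁|_p] < ∞` and `φ_p = E[log |a₁|_p] < 0`; let
`Z_∞^p` be the a.s. limit of `B_n = Σ_{k=1}^n a₁⋯a_{k-1} b_k` in `ℚ_p` and let
`ν_p` be its law.  Then almost surely, for every bounded continuous `f : ℚ_p → ℝ`,
`∫ f(A_n z + B_n) dν_p(z) → f(Z_∞^p)`, i.e. `x_n ν_p` converges weakly to the
Dirac measure at `Z_∞^p`. -/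
theorem statement2
    {Ω : Type*} [MeasureSpace Ω] [IsProbabilityMeasure (ℙ : Measure Ω)]
    (a b : ℕ → Ω → ℚ)
    (hmeas : ∀ n, Measurable fun ω => (a n ω, b n ω))
    (hindep : iIndepFun (fun n ω => (a n ω, b n ω)) ℙ)
    (hident : ∀ n, IdentDistrib (fun ω => (a n ω, b n ω)) (fun ω => (a 0 ω, b 0 ω)) ℙ ℙ)
    (hne : ∀ n ω, a n ω ≠ 0)
    {K : Type*} [NormedField K] [CompleteSpace K] [MeasurableSpace K] [BorelSpace K]
    (ι : ℚ →+* K) (hdense : DenseRange ι)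
    (hplace : (∀ q : ℚ, ‖ι q‖ = |(q : ℝ)|) ∨
      ∃ p : ℕ, p.Prime ∧ ∀ q : ℚ, ‖ι q‖ = (padicNorm p q : ℝ))
    (hInta : Integrable (fun ω => Real.log ‖ι (a 0 ω)‖) ℙ)
    (hIntb : Integrable (fun ω => max (Real.log ‖ι (b 0 ω)‖) 0) ℙ)
    (hdrift : ∫ ω, Real.log ‖ι (a 0 ω)‖ ∂ℙ < 0)
    (Z : Ω → K)
    (hZ : ∀ᵐ ω ∂ℙ,
      Tendsto (fun n => ι (∑ k ∈ Finset.range n, (∏ j ∈ Finset.range k, a j ω) * b k ω))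
        atTop (𝓝 (Z ω))) :
    ∀ᵐ ω ∂ℙ, ∀ f : K → ℝ, Continuous f → (∃ C, ∀ x, |f x| ≤ C) →
      Tendsto (fun n =>
          ∫ z, f (ι (∏ k ∈ Finset.range n, a k ω) * z
              + ι (∑ k ∈ Finset.range n, (∏ j ∈ Finset.range k, a j ω) * b k ω))
            ∂(Measure.map Z ℙ))
        atTop (𝓝 (f (Z ω))) := by
  -- log-norm of a
  set X : ℕ → Ω → ℝ := fun n ω => Real.log ‖ι (a n ω)‖ with hXdef
  have gmeas : Measurable (fun p : ℚ × ℚ => Real.log ‖ι p.1‖) :=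
    (measurable_from_top (f := fun q : ℚ => Real.log ‖ι q‖)).comp measurable_fst
  have hXindep : Pairwise (Function.onFun (IndepFun · · ℙ) X) := by
    intro i j hij
    exact (hindep.comp (fun _ => (fun p : ℚ × ℚ => Real.log ‖ι p.1‖)) fun _ => gmeas).indepFun hij
  have hXident : ∀ n, IdentDistrib (X n) (X 0) ℙ ℙ := fun n => (hident n).comp gmeas
  have hSLLN := strong_law_ae_real X hInta hXindep hXident
  -- Z is AEMeasurable
  have hBmeas : ∀ n, Measurable fun ω =>
      ι (∑ k ∈ Finset.range n, (∏ j ∈ Finset.range k, a j ω) * b k ω) := by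
    intro n
    apply measurable_from_top.comp
    apply Finset.measurable_sum
    intro k _
    apply Measurable.mul
    · exact Finset.measurable_prod _ fun j _ => (measurable_fst.comp (hmeas j))
    · exact measurable_snd.comp (hmeas k)
  have hZmeas : AEMeasurable Z ℙ :=
    aemeasurable_of_tendsto_metrizable_ae _ (fun n => (hBmeas n).aemeasurable) hZ
  have hprob : IsProbabilityMeasure (Measure.map Z ℙ) := Measure.isProbabilityMeasure_map hZmeas
  filter_upwards [hSLLN, hZ] with ω hS hB
  -- partial sums of X tend to -∞
  have hsum : Tendsto (fun n => ∑ i ∈ Finset.range n, X i ω) atTop atBot := by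
    have h1 : Tendsto (fun n : ℕ =>
        ((∑ i ∈ Finset.range n, X i ω) / n) * n) atTop atBot :=
      Tendsto.neg_mul_atTop hdrift hS tendsto_natCast_atTop_atTop
    apply h1.congr'
    filter_upwards [eventually_ge_atTop 1] with n hn
    field_simp
  -- the products A_n tend to 0 in K
  have hA : Tendsto (fun n => ι (∏ k ∈ Finset.range n, a k ω)) atTop (𝓝 0) := by
    rw [tendsto_zero_iff_norm_tendsto_zero]
    have heq : ∀ n, ‖ι (∏ k ∈ Finset.range n, a k ω)‖
        = Real.exp (∑ i ∈ Finset.range n, X i ω) := by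
      intro n
      rw [map_prod, norm_prod, Real.exp_sum]
      refine Finset.prod_congr rfl fun i _ => ?_
      rw [Real.exp_log]
      exact norm_pos_iff.2 (map_ne_zero ι |>.2 (hne i ω))
    simp only [heq]
    exact Real.tendsto_exp_atBot.comp hsum
  intro f hf ⟨C, hC⟩
  have key : Tendsto (fun n =>
      ∫ z, f (ι (∏ k ∈ Finset.range n, a k ω) * z
          + ι (∑ k ∈ Finset.range n, (∏ j ∈ Finset.range k, a j ω) * b k ω))
        ∂(Measure.map Z ℙ)) atTop (𝓝 (∫ _z, f (Z ω) ∂(Measure.map Z ℙ))) := by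
    apply tendsto_integral_of_dominated_convergence (fun _ => C)
    · intro n
      exact (hf.comp ((continuous_const.mul continuous_id).add continuous_const)).aestronglyMeasurable
    · exact integrable_const C
    · intro n
      filter_upwards with z
      rw [Real.norm_eq_abs]; exact hC _
    · filter_upwards with z
      have hz : Tendsto (fun n => ι (∏ k ∈ Finset.range n, a k ω) * z
          + ι (∑ k ∈ Finset.range n, (∏ j ∈ Finset.range k, a j ω) * b k ω))
          atTop (𝓝 (Z ω)) := by
        have := (hA.mul_const z).add hB
        simpa using this
      exact (hf.tendsto _).comp hz
  simpa [integral_const] using key
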